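/- Let t ≥ 0, let v be a non-root vertex of a perfect binary tree, and let u be a grandchild of v with u ≠ root. If u is weakly t-stable and ξ_t(v) = ξ_t(u), then v is weakly t-stable. -/

import Mathlib

open SimpleGraph Set

variable {V : Type*}

/-- The majority-dynamics process generated by the initial opinion vector `σ`:
`ξ (t+1) v` is the sign of the sum of the opinions `ξ t` over the neighbours of `v`. -/
noncomputable def dyn (G : SimpleGraph V) (σ : V → ℤ) : ℕ → V → ℤ
  | 0 => σ
  | t + 1 => fun v => if 0 < ∑ᶠ u ∈ G.neighborSet v, dyn G σ t u then 1 else -1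

/-- `σ` is a valid vector of opinions, i.e. takes values in `{-1, 1}`. -/
def PM (σ : V → ℤ) : Prop := ∀ v, σ v = 1 ∨ σ v = -1

/-- The degree of a vertex. -/
noncomputable def degree' (G : SimpleGraph V) (v : V) : ℕ := (G.neighborSet v).ncard

/-- A leaf is a vertex of degree 1. -/
def IsLeaf (G : SimpleGraph V) (v : V) : Prop := degree' G v = 1

/-- The number of neighbours of `v` that are leaves. -/
noncomputable def leafNbrs (G : SimpleGraph V) (v : V) : ℕ := {u | G.Adj v u ∧ IsLeaf G u}.ncard

/-- All degrees of `G` are odd. -/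
def OddDegrees (G : SimpleGraph V) : Prop := ∀ v, Odd (degree' G v)

/-- `v` is `t`-stable for the process `ξ`. -/
def Stable (ξ : ℕ → V → ℤ) (v : V) (t : ℕ) : Prop :=
  ∀ s, t ≤ s → s % 2 = t % 2 → ξ (s + 2) v = ξ s v

/-- `G` is a perfect `k`-ary tree of height `h` rooted at `R`. -/
noncomputable def IsPerfectKAry (G : SimpleGraph V) (R : V) (k h : ℕ) : Prop :=
  G.IsTree ∧ (∀ v, degree' G v = 1 ∨ degree' G v = k + 1) ∧
    (∀ v, degree' G v = 1 → G.dist R v = h) ∧ degree' G R = k + 1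

/-- The set of descendants of `v` (including `v`) in the tree rooted at `R`:
those vertices `u` such that `v` lies on the (unique) geodesic from `R` to `u`. -/
noncomputable def desc (G : SimpleGraph V) (R v : V) : Set V :=
  {u | G.dist R u = G.dist R v + G.dist v u}

/-- `p` is the parent of `c` in the tree rooted at `R`. -/
noncomputable def IsParent (G : SimpleGraph V) (R p c : V) : Prop :=
  G.Adj p c ∧ G.dist R p + 1 = G.dist R c

/-- `v` is weakly `t`-stable for the process `ξ` (in the tree rooted at `R`): there is a
vector of initial opinions agreeing with `ξ t` on the subtree of descendants of `v` for
which `v` is 0-stable. -/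
noncomputable def WeaklyStable (G : SimpleGraph V) (R : V) (ξ : ℕ → V → ℤ) (v : V)
    (t : ℕ) : Prop :=
  ∃ σ' : V → ℤ, PM σ' ∧ (∀ w ∈ desc G R v, σ' w = ξ t w) ∧
    ∀ s, s % 2 = 0 → dyn G σ' (s + 2) v = dyn G σ' s v

/-! ### Auxiliary lemmas -/

section BasicDyn

variable {G : SimpleGraph V} {R : V}

lemma dyn_zero' (σ : V → ℤ) (x : V) : dyn G σ 0 x = σ x := rfl

lemma dyn_succ' (σ : V → ℤ) (s : ℕ) (x : V) :
    dyn G σ (s + 1) x = if 0 < ∑ᶠ z ∈ G.neighborSet x, dyn G σ s z then 1 else -1 := rfl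

lemma finsum_mem_fin' (S : Set V) (hfin : S.Finite) (f : V → ℤ) :
    ∑ᶠ z ∈ S, f z = ∑ z ∈ hfin.toFinset, f z := by
  conv_lhs => rw [← Set.Finite.coe_toFinset hfin]
  exact finsum_mem_coe_finset _ _

lemma PM_dyn' {σ : V → ℤ} (hσ : PM σ) (s : ℕ) : PM (dyn G σ s) := by
  induction s with
  | zero => exact hσ
  | succ s ih => intro x; rw [dyn_succ']; split <;> simp

lemma sign_eq' {c S : ℤ} (hc : c = 1 ∨ c = -1) (h : 1 ≤ c * S) :
    (if 0 < S then (1:ℤ) else -1) = c := by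
  rcases hc with rfl | rfl
  · rw [one_mul] at h; rw [if_pos (by omega)]
  · rw [neg_one_mul] at h; rw [if_neg (by omega)]

lemma pm_mul_le_one' {c a : ℤ} (hc : c = 1 ∨ c = -1) (ha : a = 1 ∨ a = -1) : c * a ≤ 1 := by
  rcases hc with rfl | rfl <;> rcases ha with rfl | rfl <;> norm_num

lemma neg_one_le_pm_mul' {c a : ℤ} (hc : c = 1 ∨ c = -1) (ha : a = 1 ∨ a = -1) :
    -1 ≤ c * a := by
  rcases hc with rfl | rfl <;> rcases ha with rfl | rfl <;> norm_num

lemma eq_of_one_le_mul' {c a : ℤ} (hc : c = 1 ∨ c = -1) (ha : a = 1 ∨ a = -1)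
    (h : 1 ≤ c * a) : a = c := by
  rcases hc with rfl | rfl <;> rcases ha with rfl | rfl <;> omega

lemma if_mono' {c S₁ S₂ : ℤ} (hc : c = 1 ∨ c = -1) (h : c * S₁ ≤ c * S₂) :
    c * (if 0 < S₁ then (1:ℤ) else -1) ≤ c * (if 0 < S₂ then (1:ℤ) else -1) := by
  rcases hc with rfl | rfl <;> split_ifs <;> omega

end BasicDyn

section TreeLemmas

variable {G : SimpleGraph V} {R : V}

lemma mem_desc_iff' {x z : V} : z ∈ desc G R x ↔ G.dist R z = G.dist R x + G.dist x z :=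
  Iff.rfl

lemma path_length_eq' (hT : G.IsTree) {a b : V} (p : G.Walk a b) (hp : p.IsPath) :
    p.length = G.dist a b := by
  obtain ⟨q, hq, hlen⟩ := hT.isConnected.exists_path_of_dist a b
  rw [(hT.existsUnique_path a b).unique hp hq, hlen]

lemma isPath_concat' {a b c : V} {p : G.Walk a b} (hp : p.IsPath) (h : G.Adj b c)
    (hc : c ∉ p.support) : (p.concat h).IsPath := by
  rw [Walk.isPath_def, Walk.support_concat]
  rw [List.nodup_append]
  refine ⟨hp.support_nodup, List.nodup_singleton c, ?_⟩
  intro x hx y hy hxy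
  simp only [List.mem_singleton] at hy
  subst hy
  subst hxy
  exact hc hx

lemma exists_parent' (hT : G.IsTree) {x : V} (hx : x ≠ R) :
    ∃ y, G.Adj y x ∧ G.dist R y + 1 = G.dist R x := by
  have hr : G.Reachable R x := hT.isConnected R x
  obtain ⟨p, hp, hlen⟩ := hr.exists_path_of_dist
  obtain ⟨y, hadj, q, hq⟩ := Walk.exists_eq_cons_of_ne hx p.reverse
  have hlq : q.length + 1 = G.dist R x := by
    have h1 : p.reverse.length = p.length := Walk.length_reverse p
    rw [hq, Walk.length_cons] at h1
    omega
  have h2 : G.dist R y ≤ q.length := by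
    have := SimpleGraph.dist_le q.reverse
    rwa [Walk.length_reverse] at this
  have h3 : G.dist R x ≤ G.dist R y + 1 := by
    have ht := hT.isConnected.dist_triangle (u := R) (v := y) (w := x)
    have : G.dist y x = 1 := SimpleGraph.dist_eq_one_iff_adj.mpr hadj.symm
    omega
  exact ⟨y, hadj.symm, by omega⟩

lemma parent_unique' (hT : G.IsTree) {x y₁ y₂ : V}
    (h₁ : G.Adj y₁ x) (hd₁ : G.dist R y₁ + 1 = G.dist R x)
    (h₂ : G.Adj y₂ x) (hd₂ : G.dist R y₂ + 1 = G.dist R x) : y₁ = y₂ := by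
  have key : ∀ {y : V}, G.Adj y x → G.dist R y + 1 = G.dist R x →
      ∃ p : G.Walk R x, p.IsPath ∧ p.reverse.getVert 1 = y := by
    intro y hadj hdy
    classical
    obtain ⟨p, hp, hlen⟩ := (hT.isConnected R y).exists_path_of_dist
    have hxs : x ∉ p.support := by
      intro hxsup
      have h1 := SimpleGraph.dist_le (p.takeUntil x hxsup)
      have h2 := p.length_takeUntil_le hxsup
      omega
    refine ⟨p.concat hadj, isPath_concat' hp hadj hxs, ?_⟩
    rw [Walk.reverse_concat, Walk.getVert_cons_succ, Walk.getVert_zero]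
  obtain ⟨p₁, hp₁, hg₁⟩ := key h₁ hd₁
  obtain ⟨p₂, hp₂, hg₂⟩ := key h₂ hd₂
  rw [(hT.existsUnique_path R x).unique hp₁ hp₂] at hg₁
  rw [← hg₁, ← hg₂]

lemma adj_dist' (hT : G.IsTree) {y z : V} (h : G.Adj y z) :
    G.dist R z = G.dist R y + 1 ∨ G.dist R y = G.dist R z + 1 := by
  classical
  obtain ⟨p, hp, hlen⟩ := (hT.isConnected R y).exists_path_of_dist
  by_cases hz : z ∈ p.support
  · right
    have h1 : (p.takeUntil z hz).length = G.dist R z := path_length_eq' hT _ (hp.takeUntil hz)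
    have h2 : (p.dropUntil z hz).length = G.dist z y := path_length_eq' hT _ (hp.dropUntil hz)
    have h3 : G.dist z y = 1 := SimpleGraph.dist_eq_one_iff_adj.mpr h.symm
    have h4 : (p.takeUntil z hz).length + (p.dropUntil z hz).length = p.length := by
      rw [← Walk.length_append, p.take_spec hz]
    omega
  · left
    have hcp := path_length_eq' hT _ (isPath_concat' hp h hz)
    rw [Walk.length_concat] at hcp
    omega

lemma mem_desc_self' (x : V) : x ∈ desc G R x := by
  rw [mem_desc_iff', SimpleGraph.dist_self]
  omega

lemma mem_desc_of_adj' (hconn : G.Connected) {x z z' : V} (hz : z ∈ desc G R x)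
    (hadj : G.Adj z z') (hd : G.dist R z' = G.dist R z + 1) : z' ∈ desc G R x := by
  rw [mem_desc_iff'] at hz ⊢
  have h3 : G.dist z z' = 1 := SimpleGraph.dist_eq_one_iff_adj.mpr hadj
  have h1 : G.dist x z' ≤ G.dist x z + 1 := by
    have := hconn.dist_triangle (u := x) (v := z) (w := z'); omega
  have h2 : G.dist R z' ≤ G.dist R x + G.dist x z' := hconn.dist_triangle
  omega

lemma desc_trans' (hconn : G.Connected) {x y z : V} (hy : y ∈ desc G R x)
    (hz : z ∈ desc G R y) : z ∈ desc G R x := by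
  rw [mem_desc_iff'] at hy hz ⊢
  have h1 : G.dist x z ≤ G.dist x y + G.dist y z := hconn.dist_triangle
  have h2 : G.dist R z ≤ G.dist R x + G.dist x z := hconn.dist_triangle
  omega

lemma desc_boundary' (hT : G.IsTree) {x z y : V} (hz : z ∈ desc G R x) (hy : y ∉ desc G R x)
    (hadj : G.Adj y z) : z = x ∧ G.Adj y x ∧ G.dist R y + 1 = G.dist R x := by
  have hconn := hT.isConnected
  rcases adj_dist' (R := R) hT hadj with hzy | hyz
  · have hzx : z = x := by
      by_contra hne
      have hzd := hz
      rw [mem_desc_iff'] at hzd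
      have hxz0 : G.dist x z ≠ 0 := by
        intro h0
        rcases SimpleGraph.dist_eq_zero_iff_eq_or_not_reachable.mp h0 with h' | h'
        · exact hne h'.symm
        · exact h' (hconn x z)
      obtain ⟨q, hq, hlq⟩ := (hconn x z).exists_path_of_dist
      obtain ⟨y', hady', q'', hq''⟩ := Walk.exists_eq_cons_of_ne (fun h' => hne h') q.reverse
      have hlq'' : q''.length + 1 = G.dist x z := by
        have h1 : q.reverse.length = q.length := Walk.length_reverse q
        rw [hq'', Walk.length_cons] at h1; omega
      have hxy' : G.dist x y' ≤ q''.length := by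
        have := SimpleGraph.dist_le q''.reverse
        rwa [Walk.length_reverse] at this
      have hy'z : G.dist y' z = 1 := SimpleGraph.dist_eq_one_iff_adj.mpr hady'.symm
      have hRy'1 : G.dist R y' ≤ G.dist R x + G.dist x y' := hconn.dist_triangle
      have hRz : G.dist R z ≤ G.dist R y' + G.dist y' z := hconn.dist_triangle
      have hdp : G.dist R y' + 1 = G.dist R z := by omega
      have : y = y' := parent_unique' hT hadj (by omega) hady'.symm hdp
      subst this
      apply hy
      rw [mem_desc_iff']
      omega
    subst hzx
    exact ⟨rfl, hadj, by rw [mem_desc_iff'] at hz; omega⟩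
  · exact absurd (mem_desc_of_adj' hconn hz hadj.symm hyz) hy

end TreeLemmas

section DynLemmas

variable [Fintype V] {G : SimpleGraph V} {R : V} {h : ℕ}

lemma degree_three' (hperf : IsPerfectKAry G R 2 h) {x a b : V} (ha : G.Adj x a)
    (hb : G.Adj x b) (hab : a ≠ b) :
    ∃ c', G.neighborSet x = {a, b, c'} ∧ a ≠ c' ∧ b ≠ c' := by
  have hfin : (G.neighborSet x).Finite := Set.toFinite _
  have hsub2 : ({a, b} : Set V) ⊆ G.neighborSet x := by
    intro z hz
    rcases hz with rfl | hz
    · exact ha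
    · rw [Set.mem_singleton_iff] at hz; subst hz; exact hb
  have hd3 : (G.neighborSet x).ncard = 3 := by
    rcases hperf.2.1 x with h1 | h3
    · exfalso
      have h2 := Set.ncard_le_ncard hsub2 hfin
      rw [Set.ncard_pair hab] at h2
      rw [degree'] at h1
      omega
    · simpa [degree'] using h3
  have hex : ∃ c' ∈ G.neighborSet x, c' ∉ ({a, b} : Set V) := by
    by_contra hcon
    push_neg at hcon
    have hle := Set.ncard_le_ncard hcon (Set.toFinite ({a, b} : Set V))
    rw [Set.ncard_pair hab] at hle
    omega
  obtain ⟨c', hc'N, hc'ab⟩ := hex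
  have hane : a ≠ c' := fun h' => hc'ab (by rw [← h']; exact Set.mem_insert _ _)
  have hbne : b ≠ c' := fun h' => hc'ab (by rw [← h']; exact Set.mem_insert_of_mem _ rfl)
  refine ⟨c', ?_, hane, hbne⟩
  have hsub : ({a, b, c'} : Set V) ⊆ G.neighborSet x := by
    intro z hz
    simp only [Set.mem_insert_iff, Set.mem_singleton_iff] at hz
    rcases hz with rfl | rfl | rfl
    · exact ha
    · exact hb
    · exact hc'N
  have hcard : ({a, b, c'} : Set V).ncard = 3 := by
    rw [Set.ncard_insert_of_notMem (by simp [hab, hane]) (Set.toFinite _),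
      Set.ncard_pair hbne]
  exact (Set.eq_of_subset_of_ncard_le hsub (by rw [hd3, hcard]) hfin).symm

lemma nbr_sum_eq' {x a b c' : V} (hN : G.neighborSet x = {a, b, c'}) (hab : a ≠ b)
    (hac : a ≠ c') (hbc : b ≠ c') (f : V → ℤ) :
    ∑ᶠ z ∈ G.neighborSet x, f z = f a + f b + f c' := by
  classical
  rw [hN]
  have hset : ({a, b, c'} : Set V) = ((({a, b, c'} : Finset V) : Set V)) := by simp
  rw [hset, finsum_mem_coe_finset]
  rw [Finset.sum_insert (by simp [hab, hac]), Finset.sum_insert (by simp [hbc]),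
    Finset.sum_singleton]
  ring

lemma freeze' (hperf : IsPerfectKAry G R 2 h) {x : V} (hx : x ≠ R) {c : ℤ}
    (hc : c = 1 ∨ c = -1) {σ₀ : V → ℤ} (hPM : PM σ₀)
    (hout : ∀ y, y ∉ desc G R x → σ₀ y = c) :
    ∀ s y, y ∉ desc G R x → dyn G σ₀ s y = c := by
  have hT := hperf.1
  intro s
  induction s with
  | zero => exact hout
  | succ s ih =>
    intro y hy
    rw [dyn_succ']
    by_cases hbd : ∃ z, z ∈ G.neighborSet y ∧ z ∈ desc G R x
    · obtain ⟨z, hzN, hzdesc⟩ := hbd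
      have hadjyz : G.Adj y z := hzN
      obtain ⟨rfl, hadjx, hdx⟩ := desc_boundary' hT hzdesc hy hadjyz
      have hb : ∃ b, G.Adj y b ∧ b ≠ z := by
        by_cases hyR : y = R
        · by_contra hcon
          push_neg at hcon
          have hsub : G.neighborSet y ⊆ {z} := by
            intro z' hz'
            exact Set.mem_singleton_iff.mpr (hcon z' hz')
          have hle := Set.ncard_le_ncard hsub (Set.toFinite _)
          rw [Set.ncard_singleton] at hle
          have hdR := hperf.2.2.2
          rw [degree', ← hyR] at hdR
          omega
        · obtain ⟨y', hady', hdy'⟩ := exists_parent' hT hyR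
          refine ⟨y', hady'.symm, fun h' => ?_⟩
          subst h'
          omega
      obtain ⟨b, hadjyb, hbx⟩ := hb
      have hxb : z ≠ b := fun h' => hbx h'.symm
      obtain ⟨c₂, hN, hxc₂, hbc₂⟩ := degree_three' hperf hadjx hadjyb hxb
      have hbout : b ∉ desc G R z := fun hmem => hbx (desc_boundary' hT hmem hy hadjyb).1
      have hc₂adj : G.Adj y c₂ := by
        rw [← SimpleGraph.mem_neighborSet, hN]
        simp
      have hc₂out : c₂ ∉ desc G R z :=
        fun hmem => hxc₂ ((desc_boundary' hT hmem hy hc₂adj).1).symm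
      rw [nbr_sum_eq' hN hxb hxc₂ hbc₂]
      rw [ih b hbout, ih c₂ hc₂out]
      apply sign_eq' hc
      have hpm := PM_dyn' (G := G) hPM s z
      have h1 : -1 ≤ c * dyn G σ₀ s z := neg_one_le_pm_mul' hc hpm
      have hcc : c * c = 1 := by rcases hc with rfl | rfl <;> norm_num
      have hring : c * (dyn G σ₀ s z + c + c) = c * dyn G σ₀ s z + 2 * (c * c) := by ring
      rw [hring, hcc]
      omega
    · push_neg at hbd
      have hall : ∀ z ∈ (Set.toFinite (G.neighborSet y)).toFinset, dyn G σ₀ s z = c := by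
        intro z hz
        rw [Set.Finite.mem_toFinset] at hz
        exact ih z (hbd z hz)
      rw [finsum_mem_fin' _ (Set.toFinite _), Finset.sum_congr rfl hall, Finset.sum_const]
      apply sign_eq' hc
      have hcardeq : (Set.toFinite (G.neighborSet y)).toFinset.card = degree' G y := by
        rw [degree', Set.ncard_eq_toFinset_card _ (Set.toFinite _)]
      have hge : 1 ≤ (Set.toFinite (G.neighborSet y)).toFinset.card := by
        rcases hperf.2.1 y with h1 | h3 <;> omega
      set n := (Set.toFinite (G.neighborSet y)).toFinset.card with hn
      have hcc : c * c = 1 := by rcases hc with rfl | rfl <;> norm_num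
      rw [nsmul_eq_mul]
      have hring : c * ((n : ℤ) * c) = (n : ℤ) * (c * c) := by ring
      rw [hring, hcc, mul_one]
      exact_mod_cast hge

lemma dyn_mono' {c : ℤ} (hc : c = 1 ∨ c = -1) {σ τ : V → ℤ}
    (hστ : ∀ x, c * σ x ≤ c * τ x) :
    ∀ s x, c * dyn G σ s x ≤ c * dyn G τ s x := by
  intro s
  induction s with
  | zero => exact hστ
  | succ s ih =>
    intro x
    rw [dyn_succ', dyn_succ']
    apply if_mono' hc
    rw [finsum_mem_fin' _ (Set.toFinite _), finsum_mem_fin' _ (Set.toFinite _),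
      Finset.mul_sum, Finset.mul_sum]
    exact Finset.sum_le_sum fun z _ => ih z

end DynLemmas

/-- If `u` is a non-root grandchild of a non-root vertex `v` of a perfect
binary tree, `u` is weakly `t`-stable and `ξ_t(v) = ξ_t(u)`, then `v` is weakly
`t`-stable. -/
theorem weak_grandparent [Fintype V] (G : SimpleGraph V) (R : V) (h : ℕ) (hh : 1 ≤ h)
    (hperf : IsPerfectKAry G R 2 h) (v w u : V) (hv : v ≠ R) (hu : u ≠ R)
    (h1 : IsParent G R v w) (h2 : IsParent G R w u)
    (σ : V → ℤ) (hσ : PM σ) (t : ℕ)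
    (hws : WeaklyStable G R (dyn G σ) u t)
    (hop : dyn G σ t v = dyn G σ t u) :
    WeaklyStable G R (dyn G σ) v t := by
  classical
  have hT := hperf.1
  have hconn := hT.isConnected
  set c := dyn G σ t v with hcdef
  have hc : c = 1 ∨ c = -1 := PM_dyn' (G := G) hσ t v
  obtain ⟨σ'', hPM'', hagr'', hstab''⟩ := hws
  obtain ⟨p, hadjpv, hdp⟩ := exists_parent' hT hv
  have hadjvw : G.Adj v w := h1.1
  have hadjwu : G.Adj w u := h2.1
  have hdvw : G.dist R v + 1 = G.dist R w := h1.2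
  have hdwu : G.dist R w + 1 = G.dist R u := h2.2
  have hwdescv : w ∈ desc G R v := mem_desc_of_adj' hconn (mem_desc_self' v) hadjvw (by omega)
  have hudescv : u ∈ desc G R v := mem_desc_of_adj' hconn hwdescv hadjwu (by omega)
  have hdescuv : ∀ z ∈ desc G R u, z ∈ desc G R v := fun z hz => desc_trans' hconn hudescv hz
  have hpout : p ∉ desc G R v := by
    intro hmem; rw [mem_desc_iff'] at hmem; omega
  have hwoutu : w ∉ desc G R u := by
    intro hmem; rw [mem_desc_iff'] at hmem; omega
  have hpne : p ≠ w := by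
    intro h'
    rw [h'] at hdp
    omega
  obtain ⟨w₂, hNv, hpw₂, hww₂⟩ := degree_three' hperf hadjpv.symm hadjvw hpne
  have hvune : v ≠ u := by
    intro h'
    rw [h'] at hdvw
    omega
  obtain ⟨u₂, hNw, hvu₂, huu₂⟩ := degree_three' hperf hadjvw.symm hadjwu hvune
  set σ₁ : V → ℤ := fun x => if x ∈ desc G R u then dyn G σ t x else c with hσ₁def
  set σ₂ : V → ℤ := fun x => if x ∈ desc G R v then dyn G σ t x else c with hσ₂def
  have hPM1 : PM σ₁ := by
    intro x
    simp only [hσ₁def]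
    by_cases hx : x ∈ desc G R u
    · rw [if_pos hx]; exact PM_dyn' (G := G) hσ t x
    · rw [if_neg hx]; exact hc
  have hPM2 : PM σ₂ := by
    intro x
    simp only [hσ₂def]
    by_cases hx : x ∈ desc G R v
    · rw [if_pos hx]; exact PM_dyn' (G := G) hσ t x
    · rw [if_neg hx]; exact hc
  have hσ₁out : ∀ y, y ∉ desc G R u → σ₁ y = c := fun y hy => if_neg hy
  have hσ₂out : ∀ y, y ∉ desc G R v → σ₂ y = c := fun y hy => if_neg hy
  have freeze1 : ∀ s y, y ∉ desc G R u → dyn G σ₁ s y = c :=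
    freeze' hperf hu hc hPM1 hσ₁out
  have freeze2 : ∀ s y, y ∉ desc G R v → dyn G σ₂ s y = c :=
    freeze' hperf hv hc hPM2 hσ₂out
  have hcc : c * c = 1 := by rcases hc with h' | h' <;> rw [h'] <;> norm_num
  have hstabu'' : ∀ k, dyn G σ'' (2 * k) u = c := by
    intro k
    induction k with
    | zero =>
      show σ'' u = c
      rw [hagr'' u (mem_desc_self' u), ← hop]
    | succ k ih =>
      have hst := hstab'' (2 * k) (by omega)
      rw [show 2 * (k + 1) = 2 * k + 2 by ring, hst, ih]
  have hmono1 : ∀ s x, c * dyn G σ'' s x ≤ c * dyn G σ₁ s x := by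
    apply dyn_mono' hc
    intro x
    by_cases hx : x ∈ desc G R u
    · simp only [hσ₁def]
      rw [if_pos hx, hagr'' x hx]
    · simp only [hσ₁def]
      rw [if_neg hx, hcc]
      exact pm_mul_le_one' hc (hPM'' x)
  have hstab1 : ∀ k, dyn G σ₁ (2 * k) u = c := by
    intro k
    have hh1 := hmono1 (2 * k) u
    rw [hstabu'' k, hcc] at hh1
    exact eq_of_one_le_mul' hc (PM_dyn' (G := G) hPM1 _ u) hh1
  have main : ∀ k, (∀ x, x ∈ desc G R u → Even (G.dist R u + G.dist R x) →
      c * dyn G σ₁ (2 * k) x ≤ c * dyn G σ₂ (2 * k) x) ∧ dyn G σ₂ (2 * k) v = c := by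
    intro k
    induction k with
    | zero =>
      constructor
      · intro x hx _
        have hxx : σ₁ x = σ₂ x := by
          simp only [hσ₁def, hσ₂def]
          rw [if_pos hx, if_pos (hdescuv x hx)]
        show c * σ₁ x ≤ c * σ₂ x
        rw [hxx]
      · show σ₂ v = c
        simp only [hσ₂def]
        rw [if_pos (mem_desc_self' v)]
    | succ k ih =>
      obtain ⟨ha, hb⟩ := ih
      have hstep_c : ∀ x, x ∈ desc G R u → ¬ Even (G.dist R u + G.dist R x) →
          c * dyn G σ₁ (2 * k + 1) x ≤ c * dyn G σ₂ (2 * k + 1) x := by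
        intro x hx hpar
        have hxu : x ≠ u := by
          intro h'
          rw [h'] at hpar
          exact hpar ⟨G.dist R u, rfl⟩
        rw [dyn_succ', dyn_succ']
        apply if_mono' hc
        rw [finsum_mem_fin' _ (Set.toFinite _), finsum_mem_fin' _ (Set.toFinite _),
          Finset.mul_sum, Finset.mul_sum]
        apply Finset.sum_le_sum
        intro z hz
        rw [Set.Finite.mem_toFinset] at hz
        have hadjxz : G.Adj x z := hz
        have hzdesc : z ∈ desc G R u := by
          by_contra hzout
          exact hxu (desc_boundary' hT hx hzout hadjxz.symm).1
        have hzpar : Even (G.dist R u + G.dist R z) := by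
          rcases adj_dist' (R := R) hT hadjxz with h' | h' <;>
            (simp only [Nat.even_iff] at hpar ⊢; omega)
        exact ha z hzdesc hzpar
      have hu2k : dyn G σ₂ (2 * k) u = c := by
        have hh1 := ha u (mem_desc_self' u) ⟨G.dist R u, rfl⟩
        rw [hstab1 k, hcc] at hh1
        exact eq_of_one_le_mul' hc (PM_dyn' (G := G) hPM2 _ u) hh1
      have hdwstep : dyn G σ₂ (2 * k + 1) w = c := by
        rw [dyn_succ', nbr_sum_eq' hNw hvune hvu₂ huu₂]
        apply sign_eq' hc
        rw [hb, hu2k]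
        have hpm := PM_dyn' (G := G) hPM2 (2 * k) u₂
        have hle : -1 ≤ c * dyn G σ₂ (2 * k) u₂ := neg_one_le_pm_mul' hc hpm
        have hring : c * (c + c + dyn G σ₂ (2 * k) u₂) =
            2 * (c * c) + c * dyn G σ₂ (2 * k) u₂ := by ring
        rw [hring, hcc]
        omega
      constructor
      · intro x hx hpar
        rw [show 2 * (k + 1) = 2 * k + 1 + 1 by ring]
        rw [dyn_succ', dyn_succ']
        apply if_mono' hc
        rw [finsum_mem_fin' _ (Set.toFinite _), finsum_mem_fin' _ (Set.toFinite _),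
          Finset.mul_sum, Finset.mul_sum]
        apply Finset.sum_le_sum
        intro z hz
        rw [Set.Finite.mem_toFinset] at hz
        have hadjxz : G.Adj x z := hz
        by_cases hzw : z = w
        · rw [hzw, freeze1 (2 * k + 1) w hwoutu, hdwstep]
        · have hzdesc : z ∈ desc G R u := by
            by_contra hzout
            obtain ⟨hx_eq, hadjzu, hdz⟩ := desc_boundary' hT hx hzout hadjxz.symm
            exact hzw (parent_unique' hT hadjzu hdz hadjwu hdwu)
          have hzpar : ¬ Even (G.dist R u + G.dist R z) := by
            rcases adj_dist' (R := R) hT hadjxz with h' | h' <;>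
              (simp only [Nat.even_iff] at hpar ⊢; omega)
          exact hstep_c z hzdesc hzpar
      · rw [show 2 * (k + 1) = 2 * k + 1 + 1 by ring]
        rw [dyn_succ', nbr_sum_eq' hNv hpne hpw₂ hww₂]
        apply sign_eq' hc
        rw [freeze2 (2 * k + 1) p hpout, hdwstep]
        have hpm := PM_dyn' (G := G) hPM2 (2 * k + 1) w₂
        have hle : -1 ≤ c * dyn G σ₂ (2 * k + 1) w₂ := neg_one_le_pm_mul' hc hpm
        have hring : c * (c + c + dyn G σ₂ (2 * k + 1) w₂) =
            2 * (c * c) + c * dyn G σ₂ (2 * k + 1) w₂ := by ring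
        rw [hring, hcc]
        omega
  refine ⟨σ₂, hPM2, ?_, ?_⟩
  · intro z hz
    simp only [hσ₂def]
    rw [if_pos hz]
  · intro s hs
    obtain ⟨k, rfl⟩ : ∃ k, s = 2 * k := ⟨s / 2, by omega⟩
    have hA := (main k).2
    have hB := (main (k + 1)).2
    rw [show 2 * k + 2 = 2 * (k + 1) by ring, hA, hB]
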